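/- Any probability distribution r on the QPSK set {sqrt(P/2)(±1±i)} that factorizes as a product over the sign of the real part and the sign of the imaginary part (i.e., r(s1, s2) = r1(s1)*r2(s2) for signs s1, s2, with all probabilities positive) can be written as a tilt of the uniform distribution of the form r(x) proportional to exp(2*alpha*Re(x) - 2*beta*Im(x)) for suitable real alpha, beta; explicitly alpha = artanh(E_r[Re X]*sqrt(2/P))/sqrt(2P) and beta = -artanh(E_r[Im X]*sqrt(2/P))/sqrt(2P). -/

import Mathlib

open Real Finset

/-- Inverse hyperbolic tangent. -/
noncomputable def artanh (m : ℝ) : ℝ := (1 / 2) * Real.log ((1 + m) / (1 - m))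

lemma exp_artanh_aux (a b : ℝ) (ha : 0 < a) (hb : 0 < b) (hab : a + b = 1) :
    Real.exp (_root_.artanh (a - b)) = Real.sqrt a / Real.sqrt b := by
  have h1 : 1 + (a - b) = 2 * a := by linarith
  have h2 : 1 - (a - b) = 2 * b := by linarith
  have : _root_.artanh (a - b) = Real.log (Real.sqrt a) - Real.log (Real.sqrt b) := by
    rw [_root_.artanh, h1, h2, Real.log_div (by positivity) (by positivity),
      Real.log_mul (by norm_num) ha.ne', Real.log_mul (by norm_num) hb.ne',
      Real.log_sqrt ha.le, Real.log_sqrt hb.le]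
    ring
  rw [this, Real.exp_sub, Real.exp_log (Real.sqrt_pos.2 ha), Real.exp_log (Real.sqrt_pos.2 hb)]

/-- Any product-form positive distribution `r(s₁,s₂) = r₁(s₁) r₂(s₂)` on the
QPSK set `{√(P/2)(±1 ± i)}` is an exponential tilt of the uniform
distribution of the form `r(x) ∝ exp(2α Re x − 2β Im x)`, with
`α = artanh(E_r[Re X]·√(2/P))/√(2P)` and `β = −artanh(E_r[Im X]·√(2/P))/√(2P)`. -/
theorem qpsk_product_posterior_is_tilt (P : ℝ) (hP : 0 < P)
    (r1 r2 : ℝ → ℝ)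
    (hr1pos : 0 < r1 1 ∧ 0 < r1 (-1)) (hr2pos : 0 < r2 1 ∧ 0 < r2 (-1))
    (hr1sum : r1 1 + r1 (-1) = 1) (hr2sum : r2 1 + r2 (-1) = 1) :
    (let Rmean : ℝ := Real.sqrt (P / 2) * (r1 1 - r1 (-1))
     let Imean : ℝ := Real.sqrt (P / 2) * (r2 1 - r2 (-1))
     let α : ℝ := _root_.artanh (Rmean * Real.sqrt (2 / P)) / Real.sqrt (2 * P)
     let β : ℝ := -(_root_.artanh (Imean * Real.sqrt (2 / P)) / Real.sqrt (2 * P))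
     let w : ℝ → ℝ → ℝ := fun s1 s2 =>
       Real.exp (2 * α * (Real.sqrt (P / 2) * s1) - 2 * β * (Real.sqrt (P / 2) * s2))
     let Z : ℝ := w 1 1 + w 1 (-1) + w (-1) 1 + w (-1) (-1)
     ∀ s1 s2 : ℝ, (s1 = 1 ∨ s1 = -1) → (s2 = 1 ∨ s2 = -1) →
       r1 s1 * r2 s2 = w s1 s2 / Z) := by
  obtain ⟨ha, hb⟩ := hr1pos
  obtain ⟨hc, hd⟩ := hr2pos
  intro Rmean Imean α β w Z s1 s2 hs1 hs2
  set a := r1 1 with hA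
  set b := r1 (-1) with hB
  set c := r2 1 with hC
  set d := r2 (-1) with hD
  -- square-root facts
  have hsA : (0:ℝ) < Real.sqrt (P / 2) := Real.sqrt_pos.2 (by positivity)
  have hAC : Real.sqrt (P / 2) * Real.sqrt (2 / P) = 1 := by
    rw [← Real.sqrt_mul (by positivity)]
    rw [show P / 2 * (2 / P) = 1 by field_simp]
    exact Real.sqrt_one
  have hB2 : Real.sqrt (2 * P) = 2 * Real.sqrt (P / 2) := by
    rw [show (2 : ℝ) * P = 4 * (P / 2) by ring,
      Real.sqrt_mul (by norm_num : (0:ℝ) ≤ 4),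
      show Real.sqrt 4 = 2 by
        rw [show (4:ℝ) = 2 ^ 2 by norm_num]; exact Real.sqrt_sq (by norm_num)]
  set t1 : ℝ := _root_.artanh (a - b) with ht1
  set t2 : ℝ := _root_.artanh (c - d) with ht2
  have hw : ∀ u v : ℝ, w u v = Real.exp (t1 * u) * Real.exp (t2 * v) := by
    intro u v
    unfold w α β Rmean Imean
    rw [← Real.exp_add, Real.exp_eq_exp]
    have h1 : Real.sqrt (P / 2) * (a - b) * Real.sqrt (2 / P) = a - b := by
      rw [mul_right_comm, hAC, one_mul]
    have h2 : Real.sqrt (P / 2) * (c - d) * Real.sqrt (2 / P) = c - d := by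
      rw [mul_right_comm, hAC, one_mul]
    rw [h1, h2, hB2, ← ht1, ← ht2]
    field_simp
    ring
  have he1 : Real.exp t1 = Real.sqrt a / Real.sqrt b := exp_artanh_aux a b ha hb hr1sum
  have he2 : Real.exp t2 = Real.sqrt c / Real.sqrt d := exp_artanh_aux c d hc hd hr2sum
  set ra := Real.sqrt a with hra
  set rb := Real.sqrt b with hrb
  set rc := Real.sqrt c with hrc
  set rd := Real.sqrt d with hrd
  have hrapos : 0 < ra := Real.sqrt_pos.2 ha
  have hrbpos : 0 < rb := Real.sqrt_pos.2 hb
  have hrcpos : 0 < rc := Real.sqrt_pos.2 hc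
  have hrdpos : 0 < rd := Real.sqrt_pos.2 hd
  have hra2 : ra ^ 2 = a := Real.sq_sqrt ha.le
  have hrb2 : rb ^ 2 = b := Real.sq_sqrt hb.le
  have hrc2 : rc ^ 2 = c := Real.sq_sqrt hc.le
  have hrd2 : rd ^ 2 = d := Real.sq_sqrt hd.le
  have hsum1 : ra ^ 2 + rb ^ 2 = 1 := by rw [hra2, hrb2]; exact hr1sum
  have hsum2 : rc ^ 2 + rd ^ 2 = 1 := by rw [hrc2, hrd2]; exact hr2sum
  have hew : ∀ u : ℝ, (u = 1 ∨ u = -1) → ∀ t E : ℝ, 0 < E → Real.exp t = E →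
      Real.exp (t * u) = if u = 1 then E else E⁻¹ := by
    rintro u (rfl | rfl) t E hE hTE
    · simp [hTE]
    · simp only [if_neg (by norm_num : (-1:ℝ) ≠ 1)]
      rw [show t * (-1 : ℝ) = -t by ring, Real.exp_neg, hTE]
  have hZ : Z = (ra / rb) * (rc / rd) + (ra / rb) * (rc / rd)⁻¹
      + (ra / rb)⁻¹ * (rc / rd) + (ra / rb)⁻¹ * (rc / rd)⁻¹ := by
    unfold Z
    rw [hw, hw, hw, hw,
      hew 1 (Or.inl rfl) t1 _ (by positivity) he1,
      hew 1 (Or.inl rfl) t2 _ (by positivity) he2,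
      hew (-1) (Or.inr rfl) t1 _ (by positivity) he1,
      hew (-1) (Or.inr rfl) t2 _ (by positivity) he2]
    norm_num
  have hZval : Z = 1 / (ra * rb * rc * rd) := by
    rw [hZ]
    simp only [inv_div]
    have h1 : ra / rb + rb / ra = 1 / (ra * rb) := by
      field_simp; linear_combination hsum1
    have h2 : rc / rd + rd / rc = 1 / (rc * rd) := by
      field_simp; linear_combination hsum2
    calc (ra / rb) * (rc / rd) + (ra / rb) * (rd / rc)
        + (rb / ra) * (rc / rd) + (rb / ra) * (rd / rc)
        = (ra / rb + rb / ra) * (rc / rd + rd / rc) := by ring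
      _ = (1 / (ra * rb)) * (1 / (rc * rd)) := by rw [h1, h2]
      _ = 1 / (ra * rb * rc * rd) := by ring
  rw [hw, hew s1 hs1 t1 _ (by positivity) he1, hew s2 hs2 t2 _ (by positivity) he2, hZval]
  rcases hs1 with rfl | rfl <;> rcases hs2 with rfl | rfl <;>
    norm_num <;> field_simp <;>
    simp only [← hA, ← hB, ← hC, ← hD, ← hra2, ← hrb2, ← hrc2, ← hrd2] <;> ring
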